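/- Let Σ be the set of pairs (H, M) with H ≤ A(P_∞), M ≤ μ, and M^m = φ(H), where φ(a,b,c) = a and μ is the group of (q^n+1)(q−1)-th roots of unity in 𝔽_{q^{2n}}*. Then the map Ξ(G) = (π(G), π_d(G)) is a bijection from the set of subgroups of B(Q_∞) onto Σ. -/

import Mathlib

def hermMul (q : ℕ) {F : Type} [Field F] (s t : F × F × F) : F × F × F :=
  (s.1 * t.1, t.1 * s.2.1 + t.2.1,
    t.1 ^ (q + 1) * s.2.2 + t.1 * t.2.1 ^ q * s.2.1 + t.2.2)

def hermSet (q : ℕ) (F : Type) [Field F] : Set (F × F × F) :=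
  {s | s.1 ≠ 0 ∧ s.2.2 ^ q + s.2.2 = s.2.1 ^ (q + 1)}

def ggkMul (q : ℕ) {F E : Type} [Field F] [Field E] (s t : F × F × F × E) :
    F × F × F × E :=
  (s.1 * t.1, t.1 * s.2.1 + t.2.1,
    t.1 ^ (q + 1) * s.2.2.1 + t.1 * t.2.1 ^ q * s.2.1 + t.2.2.1,
    s.2.2.2 * t.2.2.2)

def ggkSet (q m : ℕ) {F E : Type} [Field F] [Field E] (ι : F →+* E) :
    Set (F × F × F × E) :=
  {s | s.1 ≠ 0 ∧ s.2.2.1 ^ q + s.2.2.1 = s.2.1 ^ (q + 1) ∧ s.2.2.2 ^ m = ι s.1}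

/-- restriction to the Hermitian coordinates: `(a,b,c,d) ↦ (a,b,c)`. -/
def projA {q m : ℕ} {F E : Type} [Field F] [Field E] {ι : F →+* E}
    (x : ggkSet q m ι) : F × F × F :=
  (x.val.1, x.val.2.1, x.val.2.2.1)

/-- the map `π_d : (a,b,c,d) ↦ d`. -/
def projD {q m : ℕ} {F E : Type} [Field F] [Field E] {ι : F →+* E}
    (x : ggkSet q m ι) : E :=
  x.val.2.2.2

/-- the map `π_a : (a,b,c,d) ↦ a`. -/
def projA0 {q m : ℕ} {F E : Type} [Field F] [Field E] {ι : F →+* E}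
    (x : ggkSet q m ι) : F :=
  x.val.1

/-- `H` is (the carrier of) a subgroup of `A(P_∞)` -/
def subgroupSetA (q : ℕ) (F : Type) [Field F] (H : Set (F × F × F)) : Prop :=
  H ⊆ hermSet q F ∧ ((1 : F), (0 : F), (0 : F)) ∈ H ∧
    (∀ s ∈ H, ∀ t ∈ H, hermMul q s t ∈ H) ∧
    ∀ s ∈ H, ∃ t ∈ H, hermMul q s t = ((1 : F), (0 : F), (0 : F))

/-- `M` is a subgroup of the group `μ` of `N`-th roots of unity -/
def subgroupSetMu (N : ℕ) (E : Type) [Field E] (M : Set E) : Prop :=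
  (∀ d ∈ M, d ^ N = 1) ∧ (1 : E) ∈ M ∧
    (∀ d ∈ M, ∀ e ∈ M, d * e ∈ M) ∧ ∀ d ∈ M, d⁻¹ ∈ M

/- ------------------ auxiliary lemmas ------------------- -/

lemma dvd_choose_two {p K : ℕ} (hp : p.Prime) (hK : p ^ 2 ∣ K) : p ∣ K.choose 2 := by
  have h2 : 2 * K.choose 2 = K * (K - 1) := by
    rcases K with _ | j
    · simp
    · rw [Nat.choose_two_right]
      refine Nat.mul_div_cancel' ?_
      have : Even ((j + 1) * (j + 1 - 1)) := by
        simpa [Nat.mul_comm] using Nat.even_mul_succ_self j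
      exact this.two_dvd
  by_cases hp2 : p = 2
  · subst hp2
    obtain ⟨t, ht⟩ := hK
    have h4 : 2 * K.choose 2 = 2 * (2 * t * (K - 1)) := by rw [h2, ht]; ring
    have := Nat.eq_of_mul_eq_mul_left (by norm_num) h4
    exact ⟨t * (K - 1), by rw [this]; ring⟩
  · have hcop : Nat.Coprime p 2 := (Nat.coprime_primes hp Nat.prime_two).mpr hp2
    have hpk : p ∣ 2 * K.choose 2 := by
      rw [h2]
      exact dvd_mul_of_dvd_left (dvd_trans (dvd_pow_self p two_ne_zero) hK) _
    exact hcop.dvd_of_dvd_mul_left hpk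

lemma pow_eq_pow_of_modEq' {G : Type} [Monoid G] {e : G} {m : ℕ} (he : e ^ m = 1)
    {a b : ℕ} (hab : a ≡ b [MOD m]) : e ^ a = e ^ b := by
  have key : ∀ c, e ^ c = e ^ (c % m) := fun c => by
    conv_lhs => rw [← Nat.div_add_mod c m]
    rw [pow_add, pow_mul, he, one_pow, one_mul]
  rw [key a, key b, hab]

lemma herm_right_inv_unique {q : ℕ} {F : Type} [Field F] {s t t' : F × F × F}
    (hs : s.1 ≠ 0) (h : hermMul q s t = (1, 0, 0))
    (h' : hermMul q s t' = (1, 0, 0)) : t = t' := by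
  have h1 : s.1 * t.1 = 1 := congrArg Prod.fst h
  have h1' : s.1 * t'.1 = 1 := congrArg Prod.fst h'
  have e1 : t.1 = t'.1 := mul_left_cancel₀ hs (h1.trans h1'.symm)
  have h2 : t.1 * s.2.1 + t.2.1 = 0 := congrArg (fun u => u.2.1) h
  have h2' : t'.1 * s.2.1 + t'.2.1 = 0 := congrArg (fun u => u.2.1) h'
  have e2 : t.2.1 = t'.2.1 := by rw [e1] at h2; linear_combination h2 - h2'
  have h3 : t.1 ^ (q + 1) * s.2.2 + t.1 * t.2.1 ^ q * s.2.1 + t.2.2 = 0 :=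
    congrArg (fun u => u.2.2) h
  have h3' : t'.1 ^ (q + 1) * s.2.2 + t'.1 * t'.2.1 ^ q * s.2.1 + t'.2.2 = 0 :=
    congrArg (fun u => u.2.2) h'
  have e3 : t.2.2 = t'.2.2 := by
    rw [e1, e2] at h3; linear_combination h3 - h3'
  exact Prod.ext e1 (Prod.ext e2 e3)

section helpers

variable {q m : ℕ} {F E : Type} [Field F] [Field E] {ι : F →+* E}
variable [instB : Group (ggkSet q m ι)]

omit instB in
lemma mem_spec (x : ggkSet q m ι) :
    x.val.1 ≠ 0 ∧ x.val.2.2.1 ^ q + x.val.2.2.1 = x.val.2.1 ^ (q + 1) ∧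
      x.val.2.2.2 ^ m = ι x.val.1 := x.2

variable (hmulB : ∀ s t : ggkSet q m ι, (s * t).val = ggkMul q s.val t.val)

include hmulB

lemma one_val (hm0 : m ≠ 0) : (1 : ggkSet q m ι).val = (1, 0, 0, 1) := by
  obtain ⟨ha, hcurve, hd⟩ := mem_spec (1 : ggkSet q m ι)
  have h : ggkMul q (1 : ggkSet q m ι).val (1 : ggkSet q m ι).val
      = (1 : ggkSet q m ι).val := by
    rw [← hmulB, one_mul]
  set a := (1 : ggkSet q m ι).val.1 with ha'
  set b := (1 : ggkSet q m ι).val.2.1 with hb'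
  set c := (1 : ggkSet q m ι).val.2.2.1 with hc'
  set d := (1 : ggkSet q m ι).val.2.2.2 with hd'
  have h1 : a * a = a := congrArg Prod.fst h
  have h2 : a * b + b = b := congrArg (fun s => s.2.1) h
  have h3 : a ^ (q + 1) * c + a * b ^ q * b + c = c := congrArg (fun s => s.2.2.1) h
  have h4 : d * d = d := congrArg (fun s => s.2.2.2) h
  have ha1 : a = 1 := mul_left_cancel₀ ha (h1.trans (mul_one a).symm)
  have hb0 : b = 0 := by
    rw [ha1] at h2; linear_combination h2
  have hc0 : c = 0 := by
    rw [ha1, hb0] at h3; simp at h3; linear_combination h3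
  have hdne : d ≠ 0 := by
    intro h0
    rw [h0, zero_pow hm0, ha1, map_one] at hd
    exact zero_ne_one hd
  have hd1 : d = 1 := mul_left_cancel₀ hdne (h4.trans (mul_one d).symm)
  show (a, b, c, d) = (1, 0, 0, 1)
  rw [ha1, hb0, hc0, hd1]

lemma mul_inv_val (hm0 : m ≠ 0) (x : ggkSet q m ι) :
    ggkMul q x.val (x⁻¹).val = (1, 0, 0, 1) := by
  rw [← hmulB, mul_inv_cancel, one_val hmulB hm0]

lemma inv_d (hm0 : m ≠ 0) (x : ggkSet q m ι) :
    (x⁻¹).val.2.2.2 = (x.val.2.2.2)⁻¹ := by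
  have h := congrArg (fun s : _ × _ × _ × E => s.2.2.2) (mul_inv_val hmulB hm0 x)
  exact (inv_eq_of_mul_eq_one_right h).symm

lemma inv_a (hm0 : m ≠ 0) (x : ggkSet q m ι) :
    (x⁻¹).val.1 = (x.val.1)⁻¹ := by
  have h := congrArg (fun s : _ × _ × _ × E => s.1) (mul_inv_val hmulB hm0 x)
  exact (inv_eq_of_mul_eq_one_right h).symm

lemma projA_mul (x y : ggkSet q m ι) :
    projA (x * y) = hermMul q (projA x) (projA y) := by
  show ((x * y).val.1, (x * y).val.2.1, (x * y).val.2.2.1) = _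
  rw [hmulB]
  rfl

lemma projD_mul (x y : ggkSet q m ι) :
    projD (x * y) = projD x * projD y := by
  show (x * y).val.2.2.2 = _
  rw [hmulB]
  rfl

lemma projA_one (hm0 : m ≠ 0) : projA (1 : ggkSet q m ι) = (1, 0, 0) := by
  show ((1 : ggkSet q m ι).val.1, (1 : ggkSet q m ι).val.2.1,
    (1 : ggkSet q m ι).val.2.2.1) = _
  rw [one_val hmulB hm0]

lemma projD_one (hm0 : m ≠ 0) : projD (1 : ggkSet q m ι) = 1 := by
  show (1 : ggkSet q m ι).val.2.2.2 = _
  rw [one_val hmulB hm0]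

lemma pow_val (hm0 : m ≠ 0) (z : ggkSet q m ι) (hz : z.val.1 = 1) (k : ℕ) :
    (z ^ k).val = (1, (k : F) * z.val.2.1,
      (k : F) * z.val.2.2.1 + (k.choose 2 : F) * z.val.2.1 ^ (q + 1),
      z.val.2.2.2 ^ k) := by
  induction k with
  | zero => simp [one_val hmulB hm0]
  | succ k ih =>
    rw [pow_succ, hmulB, ih]
    show ggkMul q _ (z.val.1, z.val.2.1, z.val.2.2.1, z.val.2.2.2) = _
    rw [hz]
    unfold ggkMul
    refine Prod.ext ?_ (Prod.ext ?_ (Prod.ext ?_ ?_))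
    · simp
    · push_cast; ring
    · show (1 : F) ^ (q + 1) * _ + 1 * z.val.2.1 ^ q * _ + z.val.2.2.1 = _
      push_cast [Nat.choose_succ_succ, Nat.choose_one_right]
      rw [pow_succ z.val.2.1 q]
      ring
    · simp [pow_succ]

end helpers

theorem stmt12 (p h q n m : ℕ) (hp : p.Prime) (hh : 0 < h) (hq : q = p ^ h)
    (hn : Odd n) (hn1 : 1 ≤ n) (hm : m * (q + 1) = q ^ n + 1)
    (F E : Type) [Field F] [Fintype F] [CharP F p] [Field E] [Fintype E] [CharP E p]
    (hF : Fintype.card F = q ^ 2) (hE : Fintype.card E = q ^ (2 * n)) (ι : F →+* E)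
    [instB : Group (ggkSet q m ι)]
    (hmulB : ∀ s t : ggkSet q m ι, (s * t).val = ggkMul q s.val t.val) :
    Set.BijOn
      (fun G : Subgroup ↥(ggkSet q m ι) =>
        ((projA '' (G : Set ↥(ggkSet q m ι)), projD '' (G : Set ↥(ggkSet q m ι))) :
          Set (F × F × F) × Set E))
      Set.univ
      {HM : Set (F × F × F) × Set E |
        subgroupSetA q F HM.1 ∧ subgroupSetMu ((q ^ n + 1) * (q - 1)) E HM.2 ∧
          (fun d : E => d ^ m) '' HM.2 = (fun s : F × F × F => ι s.1) '' HM.1} := by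
  have hq2 : 2 ≤ q := by
    rw [hq]; exact le_trans hp.two_le (Nat.le_self_pow (by omega) p)
  have hq0 : q ≠ 0 := by omega
  have hm0 : m ≠ 0 := by
    intro h0
    rw [h0, zero_mul] at hm
    exact (Nat.succ_ne_zero _) hm.symm
  -- coprimality and the Chinese remainder exponent
  have hpm : Nat.Coprime p m := by
    rw [hp.coprime_iff_not_dvd]
    intro hd
    have h1 : p ∣ q ^ n + 1 := hm ▸ Dvd.dvd.mul_right hd _
    have h2 : p ∣ q ^ n := dvd_pow (hq ▸ dvd_pow_self p hh.ne') (by omega : n ≠ 0)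
    have : p ∣ 1 := by
      have := Nat.dvd_sub h1 h2
      rwa [Nat.add_sub_cancel_left] at this
    exact hp.ne_one (Nat.dvd_one.mp this)
  have hp2m : Nat.Coprime (p ^ 2) m := hpm.pow_left 2
  obtain ⟨K, hK0, hK1⟩ := Nat.chineseRemainder hp2m 0 1
  have hp2K : p ^ 2 ∣ K := (Nat.modEq_zero_iff_dvd).mp hK0
  have hpK : p ∣ K := dvd_trans (dvd_pow_self p two_ne_zero) hp2K
  have castKF : (K : F) = 0 := (CharP.cast_eq_zero_iff F p K).mpr hpK
  have castCh : ((K.choose 2 : ℕ) : F) = 0 :=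
    (CharP.cast_eq_zero_iff F p _).mpr (dvd_choose_two hp hp2K)
  -- the exponent identity
  have hNe : (q ^ n + 1) * (q - 1) = m * (q ^ 2 - 1) := by
    have h1 : 1 ≤ q := by omega
    have h2 : 1 ≤ q ^ 2 := Nat.one_le_pow _ _ (by omega)
    have hmz : (m : ℤ) * ((q : ℤ) + 1) = (q : ℤ) ^ n + 1 := by exact_mod_cast hm
    zify [h1, h2]
    linear_combination (1 - (q : ℤ)) * hmz
  -- key inclusion lemma
  have incl : ∀ G G' : Subgroup ↥(ggkSet q m ι),
      projA '' (G : Set ↥(ggkSet q m ι)) ⊆ projA '' (G' : Set ↥(ggkSet q m ι)) →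
      projD '' (G : Set ↥(ggkSet q m ι)) ⊆ projD '' (G' : Set ↥(ggkSet q m ι)) →
      (G : Set ↥(ggkSet q m ι)) ⊆ (G' : Set ↥(ggkSet q m ι)) := by
    intro G G' hA hD x hx
    obtain ⟨x', hx'G, hx'⟩ := hA ⟨x, hx, rfl⟩
    obtain ⟨x'', hx''G, hx''⟩ := hD ⟨x, hx, rfl⟩
    -- components of x'
    have hx'1 : x'.val.1 = x.val.1 := congrArg (fun u : F × F × F => u.1) hx'
    have hx'2 : x'.val.2.1 = x.val.2.1 := congrArg (fun u : F × F × F => u.2.1) hx'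
    have hx'3 : x'.val.2.2.1 = x.val.2.2.1 := congrArg (fun u : F × F × F => u.2.2) hx'
    have hx''d : x''.val.2.2.2 = x.val.2.2.2 := hx''
    have hx1ne : x.val.1 ≠ 0 := (mem_spec x).1
    have hx'1ne : x'.val.1 ≠ 0 := by rw [hx'1]; exact hx1ne
    have hx'dne : x'.val.2.2.2 ≠ 0 := by
      intro h0
      have := (mem_spec x').2.2
      rw [h0, zero_pow hm0] at this
      exact hx'1ne (ι.injective (this.symm.trans (map_zero ι).symm))
    -- the element z = x'' * x'⁻¹
    set z : ↥(ggkSet q m ι) := x'' * x'⁻¹ with hz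
    have hzG : z ∈ G' := G'.mul_mem hx''G (G'.inv_mem hx'G)
    have hzval : z.val = ggkMul q x''.val (x'⁻¹).val := hmulB _ _
    have hz1 : z.val.1 = 1 := by
      have h1 : z.val.1 = x''.val.1 * (x'⁻¹).val.1 := congrArg Prod.fst hzval
      have hx''1 : x''.val.1 = x.val.1 := by
        apply ι.injective
        rw [← (mem_spec x'').2.2, ← (mem_spec x).2.2, hx''d]
      rw [h1, hx''1, inv_a hmulB hm0, hx'1, mul_inv_cancel₀ hx1ne]
    have hzd : z.val.2.2.2 = x.val.2.2.2 * (x'.val.2.2.2)⁻¹ := by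
      have h4 : z.val.2.2.2 = x''.val.2.2.2 * (x'⁻¹).val.2.2.2 :=
        congrArg (fun u => u.2.2.2) hzval
      rw [h4, hx''d, inv_d hmulB hm0]
    have hzdm : z.val.2.2.2 ^ m = 1 := by
      rw [(mem_spec z).2.2, hz1, map_one]
    -- z ^ K = (1,0,0,z.d)
    have hzK : (z ^ K).val = (1, 0, 0, z.val.2.2.2) := by
      rw [pow_val hmulB hm0 z hz1 K, castKF, castCh]
      have : z.val.2.2.2 ^ K = z.val.2.2.2 := by
        have := pow_eq_pow_of_modEq' hzdm hK1
        rwa [pow_one] at this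
      rw [this]
      norm_num
    have hzKG : z ^ K ∈ G' := G'.pow_mem hzG K
    -- x = x' * z ^ K
    have hxval : (x' * z ^ K).val = x.val := by
      rw [hmulB, hzK]
      show (x'.val.1 * 1, 1 * x'.val.2.1 + 0,
        (1 : F) ^ (q + 1) * x'.val.2.2.1 + 1 * (0 : F) ^ q * x'.val.2.1 + 0,
        x'.val.2.2.2 * z.val.2.2.2) = x.val
      rw [zero_pow hq0, hzd, hx'1, hx'2, hx'3]
      have : x'.val.2.2.2 * (x.val.2.2.2 * (x'.val.2.2.2)⁻¹) = x.val.2.2.2 := by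
        field_simp
      rw [this]
      simp
    have : x' * z ^ K = x := Subtype.ext hxval
    rw [← this]
    exact G'.mul_mem hx'G hzKG
  constructor
  · -- MapsTo
    intro G _
    simp only [Set.mem_setOf_eq]
    refine ⟨⟨?_, ?_, ?_, ?_⟩, ⟨?_, ?_, ?_, ?_⟩, ?_⟩
    · rintro s ⟨x, hx, rfl⟩
      exact ⟨(mem_spec x).1, (mem_spec x).2.1⟩
    · exact ⟨1, G.one_mem, projA_one hmulB hm0⟩
    · rintro s ⟨x, hx, rfl⟩ t ⟨y, hy, rfl⟩
      exact ⟨x * y, G.mul_mem hx hy, projA_mul hmulB x y⟩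
    · rintro s ⟨x, hx, rfl⟩
      refine ⟨projA x⁻¹, ⟨x⁻¹, G.inv_mem hx, rfl⟩, ?_⟩
      rw [← projA_mul hmulB, mul_inv_cancel, projA_one hmulB hm0]
    · rintro d ⟨x, hx, rfl⟩
      show projD x ^ ((q ^ n + 1) * (q - 1)) = 1
      have hcard : x.val.1 ^ (q ^ 2 - 1) = 1 := by
        have := FiniteField.pow_card_sub_one_eq_one x.val.1 (mem_spec x).1
        rwa [hF] at this
      show x.val.2.2.2 ^ ((q ^ n + 1) * (q - 1)) = 1
      rw [hNe, pow_mul, (mem_spec x).2.2, ← map_pow, hcard, map_one]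
    · exact ⟨1, G.one_mem, projD_one hmulB hm0⟩
    · rintro d ⟨x, hx, rfl⟩ e ⟨y, hy, rfl⟩
      exact ⟨x * y, G.mul_mem hx hy, projD_mul hmulB x y⟩
    · rintro d ⟨x, hx, rfl⟩
      exact ⟨x⁻¹, G.inv_mem hx, inv_d hmulB hm0 x⟩
    · ext e
      constructor
      · rintro ⟨d, ⟨x, hx, rfl⟩, rfl⟩
        exact ⟨projA x, ⟨x, hx, rfl⟩, ((mem_spec x).2.2).symm⟩
      · rintro ⟨s, ⟨x, hx, rfl⟩, rfl⟩
        exact ⟨projD x, ⟨x, hx, rfl⟩, (mem_spec x).2.2⟩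
  constructor
  · -- InjOn
    intro G _ G' _ hEq
    simp only [Prod.mk.injEq] at hEq
    obtain ⟨hA, hD⟩ := hEq
    ext x
    constructor
    · intro hx
      exact incl G G' (hA ▸ subset_rfl) (hD ▸ subset_rfl) hx
    · intro hx
      exact incl G' G (hA ▸ subset_rfl) (hD ▸ subset_rfl) hx
  · -- SurjOn
    intro HM hHM
    obtain ⟨⟨hHsub, hH1, hHmul, hHinv⟩, ⟨hMN, hM1, hMmul, hMinv⟩, himg⟩ := hHM
    refine ⟨{ carrier := {x | projA x ∈ HM.1 ∧ projD x ∈ HM.2}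
              mul_mem' := ?_
              one_mem' := ?_
              inv_mem' := ?_ }, Set.mem_univ _, ?_⟩
    · rintro x y ⟨hxA, hxD⟩ ⟨hyA, hyD⟩
      exact ⟨projA_mul hmulB x y ▸ hHmul _ hxA _ hyA,
        projD_mul hmulB x y ▸ hMmul _ hxD _ hyD⟩
    · exact ⟨projA_one hmulB hm0 ▸ hH1, projD_one hmulB hm0 ▸ hM1⟩
    · rintro x ⟨hxA, hxD⟩
      constructor
      · obtain ⟨t, htH, ht⟩ := hHinv _ hxA
        have h2 : hermMul q (projA x) (projA x⁻¹) = (1, 0, 0) := by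
          rw [← projA_mul hmulB, mul_inv_cancel, projA_one hmulB hm0]
        have h3 : projA x⁻¹ = t := herm_right_inv_unique (mem_spec x).1 h2 ht
        show projA x⁻¹ ∈ HM.1
        rw [h3]; exact htH
      · show projD x⁻¹ ∈ HM.2
        have : projD x⁻¹ = (projD x)⁻¹ := inv_d hmulB hm0 x
        rw [this]
        exact hMinv _ hxD
    · -- images are H and M
      have hHimg : ∀ s ∈ HM.1, ∃ d ∈ HM.2, d ^ m = ι s.1 := by
        intro s hs
        have : ι s.1 ∈ (fun s : F × F × F => ι s.1) '' HM.1 := ⟨s, hs, rfl⟩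
        rw [← himg] at this
        obtain ⟨d, hdM, hdm⟩ := this
        exact ⟨d, hdM, hdm⟩
      have hMimg : ∀ d ∈ HM.2, ∃ s ∈ HM.1, ι s.1 = d ^ m := by
        intro d hd
        have : d ^ m ∈ (fun d : E => d ^ m) '' HM.2 := ⟨d, hd, rfl⟩
        rw [himg] at this
        obtain ⟨s, hsH, hsm⟩ := this
        exact ⟨s, hsH, hsm⟩
      refine Prod.ext ?_ ?_
      · apply Set.Subset.antisymm
        · rintro s ⟨x, hx, rfl⟩
          exact hx.1
        · intro s hs
          obtain ⟨hs1, hscurve⟩ := hHsub hs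
          obtain ⟨d, hdM, hdm⟩ := hHimg s hs
          refine ⟨⟨(s.1, s.2.1, s.2.2, d), ⟨hs1, hscurve, hdm⟩⟩, ⟨?_, ?_⟩, rfl⟩
          · exact hs
          · exact hdM
      · apply Set.Subset.antisymm
        · rintro d ⟨x, hx, rfl⟩
          exact hx.2
        · intro d hd
          obtain ⟨s, hsH, hsm⟩ := hMimg d hd
          obtain ⟨hs1, hscurve⟩ := hHsub hsH
          refine ⟨⟨(s.1, s.2.1, s.2.2, d), ⟨hs1, hscurve, hsm.symm⟩⟩, ⟨?_, ?_⟩, rfl⟩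
          · exact hsH
          · exact hd
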